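/- In the twisted Heisenberg-Virasoro Verma module with c_I = 0, c_{L,I} ≠ 0 and h_I = -c_{L,I} (so p = 2), the vector Λ = (L(-2) + (1/c_{L,I})I(-1)L(-1) + ((c_L + 8h - 2)/(16 c_{L,I}))I(-2) + ((c_L + 24h - 2)/(48 c_{L,I}²))I(-1)²)·v is a singular vector: L(n)Λ = I(n)Λ = 0 for all n ≥ 1. -/

import Mathlib

/-- A representation of the twisted Heisenberg-Virasoro algebra `HVir` at level zero
(`C_I` acts by `0`), with the central elements `C_L`, `C_{LI}` acting by the scalars
`cL`, `cLI`. -/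
structure HVirRep (V : Type*) [AddCommGroup V] [Module ℂ V] where
  L : ℤ → Module.End ℂ V
  I : ℤ → Module.End ℂ V
  cL : ℂ
  cLI : ℂ
  rel_LL : ∀ n m : ℤ, L n * L m - L m * L n =
    ((n : ℂ) - m) • L (n + m) +
      (if n + m = 0 then (((n : ℂ) ^ 3 - n) / 12) * cL else 0) • (1 : Module.End ℂ V)
  rel_LI : ∀ n m : ℤ, L n * I m - I m * L n =
    (-(m : ℂ)) • I (n + m) -
      (if n + m = 0 then ((n : ℂ) ^ 2 + n) * cLI else 0) • (1 : Module.End ℂ V)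
  rel_II : ∀ n m : ℤ, I n * I m = I m * I n

/-- In any highest weight representation of the twisted Heisenberg-Virasoro algebra at
level zero with `c_{L,I} ≠ 0` and highest weight `(h, h_I) = (h, -c_{L,I})` (so `p = 2`),
the vector
`Λ = (L(-2) + (1/c_{L,I}) I(-1)L(-1) + ((c_L + 8h - 2)/(16 c_{L,I})) I(-2)
     + ((c_L + 24h - 2)/(48 c_{L,I}²)) I(-1)²) v`
is a singular vector: `L(n)Λ = I(n)Λ = 0` for all `n ≥ 1`. -/
theorem singular_vector_p_two {V : Type*} [AddCommGroup V] [Module ℂ V]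
    (ρ : HVirRep V) (v : V) (h : ℂ) (hc : ρ.cLI ≠ 0)
    (hLv : ∀ n : ℤ, 0 < n → ρ.L n v = 0) (hIv : ∀ n : ℤ, 0 < n → ρ.I n v = 0)
    (hL0 : ρ.L 0 v = h • v) (hI0 : ρ.I 0 v = (-ρ.cLI) • v) :
    ∀ n : ℤ, 1 ≤ n →
      ρ.L n (ρ.L (-2) v + (ρ.cLI)⁻¹ • ρ.I (-1) (ρ.L (-1) v) +
          ((ρ.cL + 8 * h - 2) / (16 * ρ.cLI)) • ρ.I (-2) v +
          ((ρ.cL + 24 * h - 2) / (48 * ρ.cLI ^ 2)) • ρ.I (-1) (ρ.I (-1) v)) = 0 ∧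
      ρ.I n (ρ.L (-2) v + (ρ.cLI)⁻¹ • ρ.I (-1) (ρ.L (-1) v) +
          ((ρ.cL + 8 * h - 2) / (16 * ρ.cLI)) • ρ.I (-2) v +
          ((ρ.cL + 24 * h - 2) / (48 * ρ.cLI ^ 2)) • ρ.I (-1) (ρ.I (-1) v)) = 0 := by

  -- commutation helper lemmas, applied to vectors
  have hLL : ∀ (n m : ℤ) (w : V), ρ.L n (ρ.L m w) = ρ.L m (ρ.L n w) +
      ((n : ℂ) - m) • ρ.L (n + m) w +
      (if n + m = 0 then (((n : ℂ) ^ 3 - n) / 12) * ρ.cL else 0) • w := by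
    intro n m w
    have h1 := congrArg (fun f : Module.End ℂ V => f w) (ρ.rel_LL n m)
    simp only [LinearMap.sub_apply, LinearMap.add_apply, LinearMap.smul_apply,
      Module.End.mul_apply, Module.End.one_apply] at h1
    rw [sub_eq_iff_eq_add] at h1
    rw [h1]; abel
  have hLI : ∀ (n m : ℤ) (w : V), ρ.L n (ρ.I m w) = ρ.I m (ρ.L n w) +
      (-(m : ℂ)) • ρ.I (n + m) w -
      (if n + m = 0 then ((n : ℂ) ^ 2 + n) * ρ.cLI else 0) • w := by
    intro n m w
    have h1 := congrArg (fun f : Module.End ℂ V => f w) (ρ.rel_LI n m)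
    simp only [LinearMap.sub_apply, LinearMap.add_apply, LinearMap.smul_apply,
      Module.End.mul_apply, Module.End.one_apply] at h1
    rw [sub_eq_iff_eq_add] at h1
    rw [h1]; abel
  have hIL : ∀ (n m : ℤ) (w : V), ρ.I m (ρ.L n w) = ρ.L n (ρ.I m w) +
      (m : ℂ) • ρ.I (n + m) w +
      (if n + m = 0 then ((n : ℂ) ^ 2 + n) * ρ.cLI else 0) • w := by
    intro n m w
    rw [hLI n m w]
    module
  have hII : ∀ (n m : ℤ) (w : V), ρ.I n (ρ.I m w) = ρ.I m (ρ.I n w) := by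
    intro n m w
    have h1 := congrArg (fun f : Module.End ℂ V => f w) (ρ.rel_II n m)
    simpa using h1
  intro n hn
  rcases (by omega : n = 1 ∨ n = 2 ∨ 3 ≤ n) with rfl | rfl | hn3
  · -- n = 1
    have E1 : ρ.L 1 (ρ.L (-1) v) = (2 * h) • v := by
      rw [hLL 1 (-1) v]
      norm_num [hLv 1 one_pos, hL0, smul_smul]
    have E2 : ρ.I 0 (ρ.L (-1) v) = (-ρ.cLI) • ρ.L (-1) v := by
      rw [hIL (-1) 0 (v)]
      norm_num [hI0, map_smul]
    have t1 : ρ.L 1 (ρ.L (-2) v) = (3 : ℂ) • ρ.L (-1) v := by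
      rw [hLL 1 (-2) v]
      norm_num [hLv 1 one_pos]
    have t2 : ρ.L 1 (ρ.I (-1) (ρ.L (-1) v)) =
        (2 * h) • ρ.I (-1) v + (-3 * ρ.cLI) • ρ.L (-1) v := by
      rw [hLI 1 (-1) (ρ.L (-1) v), E1]
      norm_num [E2, map_smul, smul_smul]
      try module
    have t3 : ρ.L 1 (ρ.I (-2) v) = (2 : ℂ) • ρ.I (-1) v := by
      rw [hLI 1 (-2) v]
      norm_num [hLv 1 one_pos]
    have F1 : ρ.L 1 (ρ.I (-1) v) = (-3 * ρ.cLI) • v := by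
      rw [hLI 1 (-1) v]
      norm_num [hLv 1 one_pos, hI0]
      try module
    have F2 : ρ.I 0 (ρ.I (-1) v) = (-ρ.cLI) • ρ.I (-1) v := by
      rw [hII 0 (-1) v, hI0, map_smul]
    have t4 : ρ.L 1 (ρ.I (-1) (ρ.I (-1) v)) = (-6 * ρ.cLI) • ρ.I (-1) v := by
      rw [hLI 1 (-1) (ρ.I (-1) v), F1]
      norm_num [F2, map_smul, smul_smul]
      try module
    have s1 : ρ.I 1 (ρ.L (-2) v) = ρ.I (-1) v := by
      rw [hIL (-2) 1 v]
      norm_num [hIv 1 one_pos]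
    have G1 : ρ.I 1 (ρ.L (-1) v) = (-ρ.cLI) • v := by
      rw [hIL (-1) 1 v]
      norm_num [hIv 1 one_pos, hI0]
    have s2 : ρ.I 1 (ρ.I (-1) (ρ.L (-1) v)) = (-ρ.cLI) • ρ.I (-1) v := by
      rw [hII 1 (-1) (ρ.L (-1) v), G1, map_smul]
    have s3 : ρ.I 1 (ρ.I (-2) v) = 0 := by
      rw [hII 1 (-2) v, hIv 1 one_pos, map_zero]
    have s4 : ρ.I 1 (ρ.I (-1) (ρ.I (-1) v)) = 0 := by
      rw [hII 1 (-1) (ρ.I (-1) v), hII 1 (-1) v, hIv 1 one_pos]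
      simp
    constructor
    · simp only [map_add, map_smul, t1, t2, t3, t4]
      match_scalars <;> field_simp <;> ring
    · simp only [map_add, map_smul, s1, s2, s3, s4, smul_zero]
      match_scalars <;> field_simp <;> norm_num
  · -- n = 2
    have E1 : ρ.L 2 (ρ.L (-1) v) = 0 := by
      rw [hLL 2 (-1) v]
      norm_num [hLv 2 (by norm_num : (0:ℤ) < 2), hLv 1 one_pos]
    have G1 : ρ.I 1 (ρ.L (-1) v) = (-ρ.cLI) • v := by
      rw [hIL (-1) 1 v]
      norm_num [hIv 1 one_pos, hI0]
    have t1 : ρ.L 2 (ρ.L (-2) v) = (4 * h + ρ.cL / 2) • v := by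
      rw [hLL 2 (-2) v]
      norm_num [hLv 2 (by norm_num : (0:ℤ) < 2), hL0, smul_smul]
      try module
    have t2 : ρ.L 2 (ρ.I (-1) (ρ.L (-1) v)) = (-ρ.cLI) • v := by
      rw [hLI 2 (-1) (ρ.L (-1) v), E1]
      norm_num [G1]
      try module
    have t3 : ρ.L 2 (ρ.I (-2) v) = (-8 * ρ.cLI) • v := by
      rw [hLI 2 (-2) v, hLv 2 (by norm_num), map_zero]
      norm_num [hI0, smul_smul]
      try module
    have F1 : ρ.L 2 (ρ.I (-1) v) = 0 := by
      rw [hLI 2 (-1) v]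
      norm_num [hLv 2 (by norm_num : (0:ℤ) < 2), hIv 1 one_pos]
    have F2 : ρ.I 1 (ρ.I (-1) v) = 0 := by
      rw [hII 1 (-1) v, hIv 1 one_pos, map_zero]
    have t4 : ρ.L 2 (ρ.I (-1) (ρ.I (-1) v)) = 0 := by
      rw [hLI 2 (-1) (ρ.I (-1) v), F1]
      norm_num [F2]
    have s1 : ρ.I 2 (ρ.L (-2) v) = 0 := by
      rw [hIL (-2) 2 v]
      norm_num [hIv 2 (by norm_num : (0:ℤ) < 2), hI0, smul_smul]
      try module
    have G2 : ρ.I 2 (ρ.L (-1) v) = 0 := by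
      rw [hIL (-1) 2 v]
      norm_num [hIv 2 (by norm_num : (0:ℤ) < 2), hIv 1 one_pos]
    have s2 : ρ.I 2 (ρ.I (-1) (ρ.L (-1) v)) = 0 := by
      rw [hII 2 (-1) (ρ.L (-1) v), G2, map_zero]
    have s3 : ρ.I 2 (ρ.I (-2) v) = 0 := by
      rw [hII 2 (-2) v, hIv 2 (by norm_num : (0:ℤ) < 2), map_zero]
    have s4 : ρ.I 2 (ρ.I (-1) (ρ.I (-1) v)) = 0 := by
      rw [hII 2 (-1) (ρ.I (-1) v), hII 2 (-1) v, hIv 2 (by norm_num : (0:ℤ) < 2)]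
      simp
    constructor
    · simp only [map_add, map_smul, t1, t2, t3, t4, smul_zero]
      match_scalars <;> field_simp <;> ring
    · simp only [map_add, map_smul, s1, s2, s3, s4, smul_zero]
      match_scalars <;> field_simp
  · -- n ≥ 3
    have hnpos : (0 : ℤ) < n := by omega
    have E1 : ρ.L n (ρ.L (-1) v) = 0 := by
      rw [hLL n (-1) v]
      simp [hLv n hnpos, hLv (n + -1) (by omega), if_neg (by omega : ¬ n + -1 = 0)]
    have G1 : ρ.I (n - 1) (ρ.L (-1) v) = 0 := by
      rw [hIL (-1) (n - 1) v]
      simp [hIv (n - 1) (by omega), hIv (-1 + (n - 1)) (by omega)]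
    have F1 : ρ.L n (ρ.I (-1) v) = 0 := by
      rw [hLI n (-1) v]
      simp [hLv n hnpos, hIv (n + -1) (by omega), if_neg (by omega : ¬ n + -1 = 0)]
    have t1 : ρ.L n (ρ.L (-2) v) = 0 := by
      rw [hLL n (-2) v]
      simp [hLv n hnpos, hLv (n + -2) (by omega), if_neg (by omega : ¬ n + -2 = 0)]
    have t2 : ρ.L n (ρ.I (-1) (ρ.L (-1) v)) = 0 := by
      rw [hLI n (-1) (ρ.L (-1) v), E1]
      have : ρ.I (n + -1) (ρ.L (-1) v) = 0 := by
        have := G1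
        rwa [show n - 1 = n + -1 by ring] at this
      simp [this, if_neg (by omega : ¬ n + -1 = 0)]
    have t3 : ρ.L n (ρ.I (-2) v) = 0 := by
      rw [hLI n (-2) v]
      simp [hLv n hnpos, hIv (n + -2) (by omega), if_neg (by omega : ¬ n + -2 = 0)]
    have t4 : ρ.L n (ρ.I (-1) (ρ.I (-1) v)) = 0 := by
      rw [hLI n (-1) (ρ.I (-1) v), F1, hII (n + -1) (-1) v, hIv (n + -1) (by omega)]
      simp [if_neg (by omega : ¬ n + -1 = 0)]
    have s1 : ρ.I n (ρ.L (-2) v) = 0 := by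
      rw [hIL (-2) n v]
      simp [hIv n hnpos, hIv (-2 + n) (by omega), if_neg (by omega : ¬ (-2 : ℤ) + n = 0)]
    have G2 : ρ.I n (ρ.L (-1) v) = 0 := by
      rw [hIL (-1) n v]
      simp [hIv n hnpos, hIv (-1 + n) (by omega), if_neg (by omega : ¬ (-1 : ℤ) + n = 0)]
    have s2 : ρ.I n (ρ.I (-1) (ρ.L (-1) v)) = 0 := by
      rw [hII n (-1) (ρ.L (-1) v), G2, map_zero]
    have s3 : ρ.I n (ρ.I (-2) v) = 0 := by
      rw [hII n (-2) v, hIv n hnpos, map_zero]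
    have s4 : ρ.I n (ρ.I (-1) (ρ.I (-1) v)) = 0 := by
      rw [hII n (-1) (ρ.I (-1) v), hII n (-1) v, hIv n hnpos]
      simp
    constructor
    · simp only [map_add, map_smul, t1, t2, t3, t4, smul_zero, add_zero, zero_add]
    · simp only [map_add, map_smul, s1, s2, s3, s4, smul_zero, add_zero, zero_add]
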